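/- Let ∂ be an M-differential on V = E^N with ordered basis a_1,...,a_N. Then there exists an upper-triangular automorphism g of V (preserving each span{a_1,...,a_i}) such that ∂' = g∂g⁻¹ is elementary, i.e., for each basis vector a, either ∂'(a) = 0 or ∂'(a) = b for some basis vector b, and moreover ∂'(x) = ∂'(y) = z with x,y,z basis vectors implies x = y. -/

import Mathlib

open Submodule Module

/-- Span of the first `k` standard basis vectors `a_1, ..., a_k` of `Fin N → E`. -/
noncomputable def Vspan (E : Type*) [Field E] (N k : ℕ) : Submodule E (Fin N → E) :=
  Submodule.span E {v : Fin N → E | ∃ i : Fin N, (i : ℕ) < k ∧ v = Pi.single i 1}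

/-- An M-differential: `d ∘ d = 0` and `d` maps `span{a_1,...,a_k}` into
`span{a_1,...,a_{k-1}}` for every `k`. -/
def IsMDiff {E : Type*} [Field E] {N : ℕ} (d : (Fin N → E) →ₗ[E] (Fin N → E)) : Prop :=
  d ∘ₗ d = 0 ∧ ∀ k : ℕ, Submodule.map d (Vspan E N k) ≤ Vspan E N (k - 1)

/-- An upper-triangular automorphism: an invertible linear map preserving every
subspace `span{a_1,...,a_k}`. -/
def IsUT {E : Type*} [Field E] {N : ℕ} (g : (Fin N → E) ≃ₗ[E] (Fin N → E)) : Prop :=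
  ∀ k : ℕ, Submodule.map g.toLinearMap (Vspan E N k) = Vspan E N k

/-- An elementary differential: each basis vector is sent to `0` or to a basis vector,
and no two distinct basis vectors have the same basis-vector image. -/
def IsElem {E : Type*} [Field E] {N : ℕ} (d : (Fin N → E) →ₗ[E] (Fin N → E)) : Prop :=
  (∀ i : Fin N, d (Pi.single i 1) = 0 ∨ ∃ j : Fin N, d (Pi.single i 1) = Pi.single j 1) ∧
  ∀ i i' j : Fin N, d (Pi.single i 1) = Pi.single j 1 →
    d (Pi.single i' 1) = Pi.single j 1 → i = i'

section Aux
variable {E : Type*} [Field E] {N : ℕ}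

noncomputable def Fspan (b : Fin N → (Fin N → E)) (k : ℕ) : Submodule E (Fin N → E) :=
  Submodule.span E (b '' {j : Fin N | (j : ℕ) < k})

def Filt (b : Fin N → (Fin N → E)) : Prop := ∀ k, Fspan b k = Vspan E N k

lemma Vspan_eq' (k : ℕ) : Vspan E N k = Fspan (fun j : Fin N => Pi.single j 1) k := by
  unfold Vspan Fspan; congr 1; ext v; constructor
  · rintro ⟨i, hi, rfl⟩; exact ⟨i, hi, rfl⟩
  · rintro ⟨i, hi, rfl⟩; exact ⟨i, hi, rfl⟩

lemma Filt_single' : Filt (fun j : Fin N => (Pi.single j 1 : Fin N → E)) :=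
  fun k => (Vspan_eq' k).symm

lemma mem_Fspan' {b : Fin N → (Fin N → E)} {k : ℕ} {j : Fin N} (hj : (j:ℕ) < k) :
    b j ∈ Fspan b k := subset_span ⟨j, hj, rfl⟩

lemma Fspan_le_of {b b' : Fin N → Fin N → E} {k : ℕ}
    (h : ∀ j : Fin N, (j:ℕ) < k → b j ∈ Fspan b' k) : Fspan b k ≤ Fspan b' k := by
  rw [Fspan, span_le]; rintro _ ⟨j, hj, rfl⟩; exact h j hj

lemma Fspan_mono (b : Fin N → Fin N → E) {k l : ℕ} (h : k ≤ l) : Fspan b k ≤ Fspan b l :=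
  span_mono (Set.image_mono (fun j hj => lt_of_lt_of_le hj h))

lemma Fspan_top {b : Fin N → Fin N → E} : Fspan b N = span E (Set.range b) := by
  unfold Fspan; congr 1
  rw [← Set.image_univ]; congr 1; ext j; simp [Fin.isLt]

lemma Vspan_top' : Vspan E N N = ⊤ := by
  rw [Vspan_eq', Fspan_top]
  have h : (fun j : Fin N => (Pi.single j 1 : Fin N → E)) = ⇑(Pi.basisFun E (Fin N)) := by
    funext j; rw [Pi.basisFun_apply]
  rw [h, Basis.span_eq]
noncomputable def filtBasis' {b : Fin N → Fin N → E} (hb : Filt b) : Basis (Fin N) E (Fin N → E) :=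
  basisOfTopLeSpanOfCardEqFinrank b
    (by rw [← Fspan_top, hb N, Vspan_top'])
    (by simp [finrank_pi])

lemma coe_filtBasis' {b : Fin N → Fin N → E} (hb : Filt b) : ⇑(filtBasis' hb) = b :=
  coe_basisOfTopLeSpanOfCardEqFinrank _ _ _

lemma Filt.injective' {b : Fin N → Fin N → E} (hb : Filt b) : Function.Injective b := by
  have := (filtBasis' hb).injective; rwa [coe_filtBasis' hb] at this

lemma Filt.ne_zero' {b : Fin N → Fin N → E} (hb : Filt b) (j : Fin N) : b j ≠ 0 := by
  have := (filtBasis' hb).ne_zero j; rwa [coe_filtBasis' hb] at this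

/-- Adding an element of the span of earlier vectors preserves the filtration. -/
lemma Filt.update_add' {b : Fin N → Fin N → E} (hb : Filt b) (i : Fin N) (w : Fin N → E)
    (hw : w ∈ Fspan b (i:ℕ)) : Filt (Function.update b i (b i + w)) := by
  intro k
  rw [← hb k]
  set b' := Function.update b i (b i + w) with hb'
  have heq : ∀ j : Fin N, j ≠ i → b' j = b j := fun j hj => Function.update_of_ne hj _ _
  have hbi : b' i = b i + w := Function.update_self _ _ _
  apply le_antisymm
  · -- Fspan b' k ≤ Fspan b k
    apply Fspan_le_of
    intro j hj
    by_cases hji : j = i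
    · subst hji
      have hwk : w ∈ Fspan b k := Fspan_mono b (le_of_lt hj) hw
      rw [hbi]
      exact add_mem (mem_Fspan' hj) hwk
    · rw [heq j hji]; exact mem_Fspan' hj
  · -- Fspan b k ≤ Fspan b' k
    apply Fspan_le_of
    intro j hj
    by_cases hji : j = i
    · subst hji
      have hwk : w ∈ Fspan b' k := by
        refine (Fspan_le_of ?_ : Fspan b (j:ℕ) ≤ Fspan b' (j:ℕ)) |>.trans
          (Fspan_mono b' (le_of_lt hj)) hw
        intro m hm
        rw [← heq m (fun h => absurd hm (by simp [h]))]
        exact mem_Fspan' hm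
      have : b j = b' j - w := by rw [hbi]; abel
      rw [this]
      exact sub_mem (mem_Fspan' hj) hwk
    · rw [← heq j hji]; exact mem_Fspan' hj
/-- Scaling by a nonzero scalar preserves the filtration. -/
lemma Filt.update_smul' {b : Fin N → Fin N → E} (hb : Filt b) (i : Fin N) (u : E)
    (hu : u ≠ 0) : Filt (Function.update b i (u • b i)) := by
  intro k
  rw [← hb k]
  set b' := Function.update b i (u • b i) with hb'
  have heq : ∀ j : Fin N, j ≠ i → b' j = b j := fun j hj => Function.update_of_ne hj _ _
  have hbi : b' i = u • b i := Function.update_self _ _ _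
  apply le_antisymm
  · apply Fspan_le_of
    intro j hj
    by_cases hji : j = i
    · subst hji; rw [hbi]; exact smul_mem _ _ (mem_Fspan' hj)
    · rw [heq j hji]; exact mem_Fspan' hj
  · apply Fspan_le_of
    intro j hj
    by_cases hji : j = i
    · subst hji
      have : b j = u⁻¹ • b' j := by rw [hbi, smul_smul, inv_mul_cancel₀ hu, one_smul]
      rw [this]
      exact smul_mem _ _ (mem_Fspan' hj)
    · rw [← heq j hji]; exact mem_Fspan' hj
end Aux

section Main
variable {E : Type*} [Field E] {N : ℕ}

def GoodUpTo (d : (Fin N → E) →ₗ[E] (Fin N → E)) (b : Fin N → Fin N → E) (n : ℕ) : Prop :=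
  (∀ i : Fin N, (i:ℕ) < n → d (b i) = 0 ∨ ∃ j : Fin N, (j:ℕ) < (i:ℕ) ∧ d (b i) = b j) ∧
  (∀ i i' j : Fin N, (i:ℕ) < n → (i':ℕ) < n → d (b i) = b j → d (b i') = b j → i = i')

lemma key' (d : (Fin N → E) →ₗ[E] (Fin N → E)) (hd : IsMDiff d) :
    ∀ n : ℕ, ∃ b : Fin N → Fin N → E, Filt b ∧ GoodUpTo d b n := by
  classical
  have hdd : ∀ x, d (d x) = 0 := by
    intro x
    have := DFunLike.congr_fun hd.1 x
    simpa using this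
  intro n
  induction n with
  | zero =>
    exact ⟨_, Filt_single', fun i hi => absurd hi (Nat.not_lt_zero _),
      fun i i' j hi _ _ _ => absurd hi (Nat.not_lt_zero _)⟩
  | succ n ih =>
    obtain ⟨b, hb, H2, H3⟩ := ih
    by_cases hnN : n < N
    swap
    · refine ⟨b, hb, fun i _ => H2 i ?_, fun i i' j _ _ h1 h2 => H3 i i' j ?_ ?_ h1 h2⟩
      all_goals exact lt_of_lt_of_le (Fin.isLt _) (le_of_not_gt hnN)
    set i₀ : Fin N := ⟨n, hnN⟩ with hi₀
    have hi₀n : (i₀ : ℕ) = n := rfl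
    set B := filtBasis' hb with hBdef
    have hB : ∀ j, B j = b j := fun j => congrFun (coe_filtBasis' hb) j
    -- d (b i₀) lies in the span of the earlier vectors
    have hdbi : d (b i₀) ∈ Fspan b n := by
      have h1 : b i₀ ∈ Fspan b (n + 1) := mem_Fspan' (by omega)
      rw [hb] at h1
      have h2 := hd.2 (n + 1) ⟨b i₀, h1, rfl⟩
      have h3 : d (b i₀) ∈ Vspan E N n := by simpa using h2
      rw [hb n]; exact h3
    set c := B.repr (d (b i₀)) with hc
    have hsupp : ∀ j ∈ c.support, (j : ℕ) < n := by
      intro j hj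
      have : d (b i₀) ∈ span E (⇑B '' {j : Fin N | (j : ℕ) < n}) := by
        rw [coe_filtBasis' hb]; exact hdbi
      exact (B.mem_span_image.mp this) hj
    have hrepr : d (b i₀) = ∑ j ∈ c.support, c j • b j := by
      have h1 := B.sum_repr (d (b i₀))
      rw [← h1]
      rw [Finset.sum_subset (Finset.subset_univ c.support)]
      · exact Finset.sum_congr rfl (fun j _ => by rw [hB])
      · intro j _ hj
        rw [Finsupp.notMem_support_iff.mp hj, zero_smul]
    -- Step A: paired vectors get zero coefficient
    have hA : ∀ j : Fin N, d (b j) ≠ 0 → c j = 0 := by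
      intro j₀ hne0
      by_contra hc0
      have hj₀supp : j₀ ∈ c.support := Finsupp.mem_support_iff.mpr hc0
      have hj₀n : (j₀ : ℕ) < n := hsupp j₀ hj₀supp
      obtain ⟨k₀, hk₀lt, hdj₀⟩ := (H2 j₀ hj₀n).resolve_left hne0
      have h0 : (0 : Fin N → E) = ∑ j ∈ c.support, c j • d (b j) := by
        rw [← hdd (b i₀), hrepr, map_sum]
        exact Finset.sum_congr rfl (fun j _ => map_smul d _ _)
      have h1 : (0 : E) = ∑ j ∈ c.support, c j * (B.repr (d (b j)) k₀) := by
        have := congrArg (fun x => B.repr x k₀) h0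
        simp only [map_zero, map_sum, map_smul, Finsupp.coe_zero, Pi.zero_apply] at this
        rw [this, Finset.sum_apply']
        exact Finset.sum_congr rfl (fun j _ => by rw [Finsupp.smul_apply, smul_eq_mul])
      rw [Finset.sum_eq_single j₀] at h1
      · rw [hdj₀, ← hB, B.repr_self, Finsupp.single_eq_same, mul_one] at h1
        exact hc0 h1.symm
      · intro j hj hjne
        rcases H2 j (hsupp j hj) with h | ⟨k, _, hdj⟩
        · rw [h]; simp
        · rw [hdj, ← hB, B.repr_self]
          have hkne : k ≠ k₀ := by
            intro hkk
            subst hkk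
            exact hjne (H3 j j₀ k (hsupp j hj) hj₀n hdj hdj₀)
          rw [Finsupp.single_eq_of_ne' hkne, mul_zero]
      · intro h
        exact absurd hj₀supp h
    -- the pairing data
    set P : Fin N → Prop := fun j => ∃ m : Fin N, (m : ℕ) < n ∧ d (b m) = b j with hP
    set mf : Fin N → Fin N := fun j => if h : P j then h.choose else j with hmf
    have hmfspec : ∀ j, P j → (mf j : ℕ) < n ∧ d (b (mf j)) = b j := by
      intro j hj
      simp only [hmf, dif_pos hj]
      exact hj.choose_spec
    set Simg : Finset (Fin N) := c.support.filter P with hSimg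
    set w : Fin N → E := ∑ j ∈ Simg, c j • b (mf j) with hw
    have hwmem : w ∈ Fspan b n := by
      apply sum_mem
      intro j hj
      exact smul_mem _ _ (mem_Fspan' (hmfspec j (Finset.mem_filter.mp hj).2).1)
    have hdw : d w = ∑ j ∈ Simg, c j • b j := by
      rw [hw, map_sum]
      exact Finset.sum_congr rfl (fun j hj => by
        rw [map_smul, (hmfspec j (Finset.mem_filter.mp hj).2).2])
    set Sf : Finset (Fin N) := c.support \ Simg with hSf
    have hsub : Simg ⊆ c.support := Finset.filter_subset _ _
    have hkey : d (b i₀ - w) = ∑ j ∈ Sf, c j • b j := by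
      rw [map_sub, hrepr, hdw, ← Finset.sum_sdiff hsub, ← hSf]
      abel
    have hSfn : ∀ j ∈ Sf, (j : ℕ) < n := fun j hj => hsupp j (Finset.mem_sdiff.mp hj).1
    have hSfd0 : ∀ j ∈ Sf, d (b j) = 0 := by
      intro j hj
      by_contra h
      exact Finsupp.mem_support_iff.mp (Finset.mem_sdiff.mp hj).1 (hA j h)
    have hSfnP : ∀ j ∈ Sf, ¬ P j := by
      intro j hj hPj
      exact (Finset.mem_sdiff.mp hj).2 (Finset.mem_filter.mpr ⟨(Finset.mem_sdiff.mp hj).1, hPj⟩)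
    have hSfc : ∀ j ∈ Sf, c j ≠ 0 := fun j hj =>
      Finsupp.mem_support_iff.mp (Finset.mem_sdiff.mp hj).1
    have hne : ∀ j : Fin N, (j : ℕ) < n → j ≠ i₀ := by
      intro j hj h
      subst h
      exact absurd (hj : n < n) (lt_irrefl n)
    by_cases hSfe : Sf = ∅
    · -- Case 1 : `d (b i₀ - w) = 0`
      set b1 := Function.update b i₀ (b i₀ + (-w)) with hb1def
      have hb1 : Filt b1 := hb.update_add' i₀ (-w) (neg_mem hwmem)
      have heq1 : ∀ j : Fin N, j ≠ i₀ → b1 j = b j := fun j hj => Function.update_of_ne hj _ _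
      have hb1i : b1 i₀ = b i₀ - w := by
        rw [hb1def, Function.update_self, sub_eq_add_neg]
      have hd1 : d (b1 i₀) = 0 := by rw [hb1i, hkey, hSfe, Finset.sum_empty]
      refine ⟨b1, hb1, ?_, ?_⟩
      · intro i hi
        by_cases hii : i = i₀
        · subst hii; exact Or.inl hd1
        · have hin : (i : ℕ) < n := by
            have h1 : (i : ℕ) ≠ n := fun h => hii (Fin.ext h)
            omega
          rw [heq1 i hii]
          rcases H2 i hin with h | ⟨k, hk, hdk⟩
          · exact Or.inl h
          · exact Or.inr ⟨k, hk, by rw [hdk, heq1 k (hne k (lt_trans hk hin))]⟩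
      · intro i i' j hi hi' h1 h2
        have hbj : b1 j ≠ 0 := hb1.ne_zero' j
        have reduce : ∀ x : Fin N, (x : ℕ) < n + 1 → d (b1 x) = b1 j →
            (x : ℕ) < n ∧ d (b x) = b j := by
          intro x hx hdx
          by_cases hxi : x = i₀
          · subst hxi; rw [hd1] at hdx; exact absurd hdx.symm hbj
          · have hxn : (x : ℕ) < n := by
              have h1 : (x : ℕ) ≠ n := fun h => hxi (Fin.ext h)
              omega
            rw [heq1 x hxi] at hdx
            rcases H2 x hxn with h | ⟨k, hk, hdk⟩
            · rw [h] at hdx; exact absurd hdx.symm hbj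
            · have hkn : k ≠ i₀ := hne k (lt_trans hk hxn)
              have hjk : b1 j = b1 k := by rw [← hdx, hdk, heq1 k hkn]
              have hjk' : j = k := hb1.injective' hjk
              exact ⟨hxn, by rw [hdk, hjk']⟩
        obtain ⟨hin, h1'⟩ := reduce i hi h1
        obtain ⟨hi'n, h2'⟩ := reduce i' hi' h2
        exact H3 i i' j hin hi'n h1' h2'
    · -- Case 2 : pick the largest free index
      have hnem : Sf.Nonempty := Finset.nonempty_iff_ne_empty.mpr hSfe
      set js : Fin N := Sf.max' hnem with hjsdef
      have hjsmem : js ∈ Sf := Sf.max'_mem hnem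
      have hmax : ∀ j ∈ Sf, j ≤ js := fun j hj => Sf.le_max' j hj
      have hjsn : (js : ℕ) < n := hSfn js hjsmem
      have hcs : c js ≠ 0 := hSfc js hjsmem
      have hjsnP : ¬ P js := hSfnP js hjsmem
      have hi0js : i₀ ≠ js := fun h => hne js hjsn h.symm
      set z : Fin N → E := ∑ j ∈ Sf.erase js, ((c js)⁻¹ * c j) • b j with hz
      have hzmem : z ∈ Fspan b (js : ℕ) := by
        apply sum_mem
        intro j hj
        have h1 : (j : ℕ) ≤ (js : ℕ) := hmax j (Finset.mem_of_mem_erase hj)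
        have h2 : (j : ℕ) ≠ (js : ℕ) := fun h => Finset.ne_of_mem_erase hj (Fin.ext h)
        exact smul_mem _ _ (mem_Fspan' (by omega))
      set b1 := Function.update b js (b js + z) with hb1def
      have hb1 : Filt b1 := hb.update_add' js z hzmem
      have hb1js : b1 js = b js + z := Function.update_self _ _ _
      have heq1 : ∀ j : Fin N, j ≠ js → b1 j = b j := fun j hj => Function.update_of_ne hj _ _
      have hv : b1 js = (c js)⁻¹ • d (b i₀ - w) := by
        rw [hb1js, hkey, ← Finset.add_sum_erase _ _ hjsmem, smul_add, smul_smul,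
          inv_mul_cancel₀ hcs, one_smul, hz, Finset.smul_sum]
        congr 1
        exact Finset.sum_congr rfl (fun j _ => by rw [smul_smul])
      set b2 := Function.update b1 i₀ (b1 i₀ + (-w)) with hb2def
      have hwmem1 : -w ∈ Fspan b1 ((i₀ : Fin N) : ℕ) := by
        show -w ∈ Fspan b1 n
        rw [(hb1 n).trans (hb n).symm]
        exact neg_mem hwmem
      have hb2 : Filt b2 := hb1.update_add' i₀ (-w) hwmem1
      set b3 := Function.update b2 i₀ ((c js)⁻¹ • b2 i₀) with hb3def
      have hb3 : Filt b3 := hb2.update_smul' i₀ (c js)⁻¹ (inv_ne_zero hcs)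
      have hb3i : b3 i₀ = (c js)⁻¹ • (b i₀ - w) := by
        rw [hb3def, Function.update_self, hb2def, Function.update_self, heq1 i₀ hi0js,
          sub_eq_add_neg]
      have heq3 : ∀ j : Fin N, j ≠ i₀ → j ≠ js → b3 j = b j := by
        intro j hj1 hj2
        rw [hb3def, Function.update_of_ne hj1, hb2def, Function.update_of_ne hj1, heq1 j hj2]
      have hb3js : b3 js = b1 js := by
        rw [hb3def, Function.update_of_ne (Ne.symm hi0js), hb2def,
          Function.update_of_ne (Ne.symm hi0js)]
      have hd3i : d (b3 i₀) = b3 js := by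
        rw [hb3i, map_smul, ← hv, hb3js]
      have hd3js : d (b3 js) = 0 := by
        rw [hb3js, hv, map_smul, hdd, smul_zero]
      refine ⟨b3, hb3, ?_, ?_⟩
      · intro i hi
        by_cases hii : i = i₀
        · subst hii; exact Or.inr ⟨js, hjsn, hd3i⟩
        · by_cases hijs : i = js
          · subst hijs; exact Or.inl hd3js
          · have hin : (i : ℕ) < n := by
              have h1 : (i : ℕ) ≠ n := fun h => hii (Fin.ext h)
              omega
            rw [heq3 i hii hijs]
            rcases H2 i hin with h | ⟨k, hk, hdk⟩
            · exact Or.inl h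
            · have hki : k ≠ i₀ := hne k (lt_trans hk hin)
              have hkjs : k ≠ js := fun h => hjsnP ⟨i, hin, h ▸ hdk⟩
              exact Or.inr ⟨k, hk, by rw [hdk, heq3 k hki hkjs]⟩
      · intro i i' j hi hi' h1 h2
        have hbj : b3 j ≠ 0 := hb3.ne_zero' j
        have reduce : ∀ x : Fin N, (x : ℕ) < n + 1 → d (b3 x) = b3 j →
            (x = i₀ ∧ j = js) ∨ ((x : ℕ) < n ∧ d (b x) = b j ∧ j ≠ js) := by
          intro x hx hdx
          by_cases hxi : x = i₀
          · subst hxi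
            rw [hd3i] at hdx
            exact Or.inl ⟨rfl, (hb3.injective' hdx).symm⟩
          · by_cases hxjs : x = js
            · subst hxjs; rw [hd3js] at hdx; exact absurd hdx.symm hbj
            · have hxn : (x : ℕ) < n := by
                have h1 : (x : ℕ) ≠ n := fun h => hxi (Fin.ext h)
                omega
              rw [heq3 x hxi hxjs] at hdx
              rcases H2 x hxn with h | ⟨k, hk, hdk⟩
              · rw [h] at hdx; exact absurd hdx.symm hbj
              · have hki : k ≠ i₀ := hne k (lt_trans hk hxn)
                have hkjs : k ≠ js := fun h => hjsnP ⟨x, hxn, h ▸ hdk⟩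
                have hjk : b3 j = b3 k := by rw [← hdx, hdk, heq3 k hki hkjs]
                have hjk' : j = k := hb3.injective' hjk
                exact Or.inr ⟨hxn, by rw [hdk, hjk'], fun h => hkjs (hjk' ▸ h)⟩
        rcases reduce i hi h1 with ⟨hii, hjj⟩ | ⟨hin, h1', hjne⟩ <;>
          rcases reduce i' hi' h2 with ⟨hii', hjj'⟩ | ⟨hi'n, h2', hjne'⟩
        · rw [hii, hii']
        · exact absurd hjj hjne'
        · exact absurd hjj' hjne
        · exact H3 i i' j hin hi'n h1' h2'
end Main

theorem stmt1 {E : Type*} [Field E] {N : ℕ} (d : (Fin N → E) →ₗ[E] (Fin N → E))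
    (hd : IsMDiff d) :
    ∃ g : (Fin N → E) ≃ₗ[E] (Fin N → E), IsUT g ∧
      IsElem (g.toLinearMap ∘ₗ d ∘ₗ g.symm.toLinearMap) := by
  obtain ⟨b, hb, H2, H3⟩ := key' d hd N
  set B := filtBasis' hb with hBdef
  have hB : ∀ j, B j = b j := fun j => congrFun (coe_filtBasis' hb) j
  set g : (Fin N → E) ≃ₗ[E] (Fin N → E) := B.equiv (Pi.basisFun E (Fin N)) (Equiv.refl _)
    with hgdef
  have hgb : ∀ j : Fin N, g (b j) = Pi.single j 1 := by
    intro j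
    rw [← hB, hgdef, B.equiv_apply, Equiv.refl_apply, Pi.basisFun_apply]
  have hgsymm : ∀ j : Fin N, g.symm (Pi.single j 1) = b j := by
    intro j
    rw [← hgb j, LinearEquiv.symm_apply_apply]
  refine ⟨g, ?_, ?_, ?_⟩
  · -- IsUT
    intro k
    conv_lhs => rw [← hb k]
    rw [Vspan_eq' k]
    rw [Fspan, Fspan, Submodule.map_span, ← Set.image_comp]
    congr 1
    ext v
    constructor
    · rintro ⟨j, hj, rfl⟩
      exact ⟨j, hj, (hgb j).symm⟩
    · rintro ⟨j, hj, rfl⟩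
      exact ⟨j, hj, hgb j⟩
  · -- IsElem part 1
    intro i
    have : (g.toLinearMap ∘ₗ d ∘ₗ g.symm.toLinearMap) (Pi.single i 1) = g (d (b i)) := by
      simp [hgsymm i]
    rw [this]
    rcases H2 i i.isLt with h | ⟨j, _, hdj⟩
    · exact Or.inl (by rw [h, map_zero])
    · exact Or.inr ⟨j, by rw [hdj, hgb j]⟩
  · -- IsElem part 2
    intro i i' j h1 h2
    have e : ∀ x : Fin N, (g.toLinearMap ∘ₗ d ∘ₗ g.symm.toLinearMap) (Pi.single x 1)
        = g (d (b x)) := by intro x; simp [hgsymm x]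
    rw [e] at h1 h2
    have h1' : d (b i) = b j := by
      have := congrArg g.symm h1
      rwa [LinearEquiv.symm_apply_apply, hgsymm j] at this
    have h2' : d (b i') = b j := by
      have := congrArg g.symm h2
      rwa [LinearEquiv.symm_apply_apply, hgsymm j] at this
    exact H3 i i' j i.isLt i'.isLt h1' h2'
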